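/- Let k > 0 and define M(c) := 4k (ξ₀ √(1 + ξ₀²) + arcsinh ξ₀) with ξ₀ := √((c − 3k)/(2k)). Then for every c > 3k the function M is differentiable at c with derivative M'(c) = 2 √((c − k)/(c − 3k)) > 0; in particular c ↦ M(c) is strictly increasing on (3k, ∞). -/

import Mathlib

lemma mass_deriv (k : ℝ) (hk : 0 < k) {c : ℝ} (hc : 3 * k < c) :
    HasDerivAt (fun c : ℝ =>
        4 * k * (Real.sqrt ((c - 3 * k) / (2 * k)) *
            Real.sqrt (1 + (Real.sqrt ((c - 3 * k) / (2 * k))) ^ 2) +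
          Real.arsinh (Real.sqrt ((c - 3 * k) / (2 * k)))))
      (2 * Real.sqrt ((c - k) / (c - 3 * k))) c := by
  have hk2 : (0:ℝ) < 2 * k := by linarith
  set u : ℝ := (c - 3 * k) / (2 * k) with hu_def
  have hu : 0 < u := div_pos (by linarith) hk2
  set a : ℝ := Real.sqrt u with ha_def
  have ha : 0 < a := Real.sqrt_pos.mpr hu
  have ha2 : a ^ 2 = u := Real.sq_sqrt hu.le
  set b : ℝ := Real.sqrt (1 + a ^ 2) with hb_def
  have hb : 0 < b := Real.sqrt_pos.mpr (by nlinarith)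
  have hb2 : b ^ 2 = 1 + a ^ 2 := Real.sq_sqrt (by nlinarith)
  -- derivative of u(c)
  have hUc : HasDerivAt (fun c : ℝ => (c - 3 * k) / (2 * k)) (1 / (2 * k)) c := by
    simpa using ((hasDerivAt_id c).sub_const (3 * k)).div_const (2 * k)
  -- derivative of ξ(c) = √(u(c))
  have hXi : HasDerivAt (fun c : ℝ => Real.sqrt ((c - 3 * k) / (2 * k)))
      (1 / (2 * a) * (1 / (2 * k))) c :=
    (Real.hasDerivAt_sqrt hu.ne').comp c hUc
  -- derivative of 1 + ξ^2
  have haa : Real.sqrt ((c - 3 * k) / (2 * k)) = a := rfl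
  have hOne : HasDerivAt (fun c : ℝ => 1 + (Real.sqrt ((c - 3 * k) / (2 * k))) ^ 2)
      (2 * a * (1 / (2 * a) * (1 / (2 * k)))) c := by
    have h := ((hXi.fun_pow 2)).const_add 1
    rw [haa] at h
    refine h.congr_deriv ?_
    push_cast
    ring
  -- derivative of √(1+ξ^2)
  have hSq : HasDerivAt (fun c : ℝ => Real.sqrt (1 + (Real.sqrt ((c - 3 * k) / (2 * k))) ^ 2))
      (1 / (2 * b) * (2 * a * (1 / (2 * a) * (1 / (2 * k))))) c :=
    (Real.hasDerivAt_sqrt (by nlinarith)).comp c hOne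
  -- derivative of arsinh ξ
  have hAr : HasDerivAt (fun c : ℝ => Real.arsinh (Real.sqrt ((c - 3 * k) / (2 * k))))
      (b⁻¹ * (1 / (2 * a) * (1 / (2 * k)))) c :=
    by have h := (Real.hasDerivAt_arsinh a).comp c hXi; exact h
  have hMain := ((hXi.mul hSq).add hAr).const_mul (4 * k)
  have hval : 4 * k * ((1 / (2 * a) * (1 / (2 * k))) * b +
      a * (1 / (2 * b) * (2 * a * (1 / (2 * a) * (1 / (2 * k))))) +
      b⁻¹ * (1 / (2 * a) * (1 / (2 * k)))) = 2 * (b / a) := by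
    have h : 4 * k * ((1 / (2 * a) * (1 / (2 * k))) * b +
        a * (1 / (2 * b) * (2 * a * (1 / (2 * a) * (1 / (2 * k))))) +
        b⁻¹ * (1 / (2 * a) * (1 / (2 * k)))) = (b ^ 2 + a ^ 2 + 1) / (a * b) := by
      field_simp
      ring
    rw [h, hb2]
    field_simp
    linear_combination (-2) * hb2
  have htarget : Real.sqrt ((c - k) / (c - 3 * k)) = b / a := by
    have h1 : (c - k) / (c - 3 * k) = (1 + u) / u := by
      rw [hu_def]; field_simp
      ring
    rw [h1, Real.sqrt_div (by positivity), hb_def, ha2]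
  rw [htarget, ← hval]
  exact hMain

theorem mass_monotone (k : ℝ) (hk : 0 < k) :
    (∀ c : ℝ, 3 * k < c →
      HasDerivAt (fun c : ℝ =>
          4 * k * (Real.sqrt ((c - 3 * k) / (2 * k)) *
              Real.sqrt (1 + (Real.sqrt ((c - 3 * k) / (2 * k))) ^ 2) +
            Real.arsinh (Real.sqrt ((c - 3 * k) / (2 * k)))))
        (2 * Real.sqrt ((c - k) / (c - 3 * k))) c ∧
      0 < 2 * Real.sqrt ((c - k) / (c - 3 * k))) ∧
    StrictMonoOn (fun c : ℝ =>
        4 * k * (Real.sqrt ((c - 3 * k) / (2 * k)) *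
            Real.sqrt (1 + (Real.sqrt ((c - 3 * k) / (2 * k))) ^ 2) +
          Real.arsinh (Real.sqrt ((c - 3 * k) / (2 * k)))))
      (Set.Ioi (3 * k)) := by
  have hpos : ∀ c : ℝ, 3 * k < c → 0 < 2 * Real.sqrt ((c - k) / (c - 3 * k)) := by
    intro c hc
    have : 0 < (c - k) / (c - 3 * k) := div_pos (by linarith) (by linarith)
    positivity
  refine ⟨fun c hc => ⟨mass_deriv k hk hc, hpos c hc⟩, ?_⟩
  apply strictMonoOn_of_deriv_pos (convex_Ioi _)
  · intro x hx
    exact (mass_deriv k hk hx).continuousAt.continuousWithinAt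
  · intro x hx
    rw [interior_Ioi] at hx
    rw [(mass_deriv k hk hx).deriv]
    exact hpos x hx
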